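/- Let G = (V,E) be a finite tree rooted at o, and let (a_e)_{e∈E} be positive reals. Then for every function g : E → ℝ, ∑_{v∈V} (∑_{e∈ℓ(v)} g(e))² ≤ max_{e∈E} [a_e^{-1} ∑_{v∈T_e} ∑_{ẽ∈ℓ(v)} a_{ẽ}] · ∑_{e∈E} g(e)². -/

import Mathlib

open Finset

/-- Edges on the path from `o` to `v` in a tree, encoded by their endpoints farther
from `o`: the vertices `u ≠ o` lying on the path from `o` to `v`. -/
noncomputable def pathE {V : Type*} [Fintype V] [DecidableEq V] (G : SimpleGraph V) (o v : V) :
    Finset V :=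
  Finset.univ.filter fun u => u ≠ o ∧ G.dist o u + G.dist u v = G.dist o v

/-- The vertex set `T_e` of the subtree hanging below the edge `e` encoded by `u`:
all vertices whose root-path passes through `u`. -/
noncomputable def subT {V : Type*} [Fintype V] [DecidableEq V] (G : SimpleGraph V) (o u : V) :
    Finset V :=
  Finset.univ.filter fun x => u ∈ pathE G o x

/-- Weighted discrete Hardy inequality on trees: for any positive edge weights
`a` and any `g : E → ℝ`,
`∑_v (∑_{e ∈ ℓ(v)} g(e))² ≤ max_e [a_e⁻¹ ∑_{v ∈ T_e} ∑_{ẽ ∈ ℓ(v)} a_ẽ] · ∑_e g(e)²`. -/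
theorem weighted_hardy_on_trees {V : Type*} [Fintype V] [DecidableEq V]
    (G : SimpleGraph V) (hG : G.IsTree) (o : V) (a : V → ℝ)
    (ha : ∀ u, u ≠ o → 0 < a u)
    (hE : (Finset.univ.filter fun u => u ≠ o).Nonempty) (g : V → ℝ) :
    ∑ v : V, (∑ u ∈ pathE G o v, g u) ^ 2 ≤
      ((Finset.univ.filter fun u => u ≠ o).sup' hE fun u =>
          (a u)⁻¹ * ∑ x ∈ subT G o u, ∑ w ∈ pathE G o x, a w) *
        ∑ u ∈ Finset.univ.filter fun u => u ≠ o, (g u) ^ 2 := by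
  classical
  set E := (Finset.univ.filter fun u : V => u ≠ o) with hEdef
  set M := E.sup' hE fun u => (a u)⁻¹ * ∑ x ∈ subT G o u, ∑ w ∈ pathE G o x, a w with hM
  have hmem : ∀ v u : V, u ∈ pathE G o v → u ≠ o := by
    intro v u hu
    exact (Finset.mem_filter.mp hu).2.1
  have hpos : ∀ v u : V, u ∈ pathE G o v → 0 < a u := fun v u hu => ha u (hmem v u hu)
  -- Step 1: Cauchy–Schwarz per vertex
  have step1 : ∀ v : V, (∑ u ∈ pathE G o v, g u) ^ 2 ≤
      (∑ u ∈ pathE G o v, a u) * ∑ u ∈ pathE G o v, g u ^ 2 / a u := by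
    intro v
    have hcs := Finset.sum_mul_sq_le_sq_mul_sq (pathE G o v)
      (fun u => Real.sqrt (a u)) (fun u => g u / Real.sqrt (a u))
    have h1 : ∑ u ∈ pathE G o v, Real.sqrt (a u) * (g u / Real.sqrt (a u)) =
        ∑ u ∈ pathE G o v, g u := by
      refine Finset.sum_congr rfl fun u hu => ?_
      have : Real.sqrt (a u) ≠ 0 := ne_of_gt (Real.sqrt_pos.mpr (hpos v u hu))
      field_simp
    have h2 : ∑ u ∈ pathE G o v, Real.sqrt (a u) ^ 2 = ∑ u ∈ pathE G o v, a u := by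
      refine Finset.sum_congr rfl fun u hu => ?_
      exact Real.sq_sqrt (le_of_lt (hpos v u hu))
    have h3 : ∑ u ∈ pathE G o v, (g u / Real.sqrt (a u)) ^ 2 =
        ∑ u ∈ pathE G o v, g u ^ 2 / a u := by
      refine Finset.sum_congr rfl fun u hu => ?_
      rw [div_pow, Real.sq_sqrt (le_of_lt (hpos v u hu))]
    rw [h1, h2, h3] at hcs
    exact hcs
  calc ∑ v : V, (∑ u ∈ pathE G o v, g u) ^ 2
      ≤ ∑ v : V, (∑ u ∈ pathE G o v, a u) * ∑ u ∈ pathE G o v, g u ^ 2 / a u :=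
        Finset.sum_le_sum fun v _ => step1 v
    _ = ∑ v : V, ∑ u ∈ pathE G o v, (∑ w ∈ pathE G o v, a w) * (g u ^ 2 / a u) := by
        refine Finset.sum_congr rfl fun v _ => ?_
        rw [Finset.mul_sum]
    _ = ∑ u ∈ E, ∑ v ∈ subT G o u, (∑ w ∈ pathE G o v, a w) * (g u ^ 2 / a u) := by
        refine Finset.sum_comm' ?_
        intro v u
        constructor
        · rintro ⟨-, hu⟩
          exact ⟨Finset.mem_filter.mpr ⟨Finset.mem_univ _, hu⟩,
            Finset.mem_filter.mpr ⟨Finset.mem_univ _, hmem v u hu⟩⟩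
        · rintro ⟨hv, -⟩
          exact ⟨Finset.mem_univ _, (Finset.mem_filter.mp hv).2⟩
    _ = ∑ u ∈ E, g u ^ 2 * ((a u)⁻¹ * ∑ v ∈ subT G o u, ∑ w ∈ pathE G o v, a w) := by
        refine Finset.sum_congr rfl fun u hu => ?_
        rw [← Finset.sum_mul]
        ring
    _ ≤ ∑ u ∈ E, g u ^ 2 * M := by
        refine Finset.sum_le_sum fun u hu => ?_
        have hle : (a u)⁻¹ * ∑ x ∈ subT G o u, ∑ w ∈ pathE G o x, a w ≤ M := by
          rw [hM]
          exact Finset.le_sup'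
            (fun u => (a u)⁻¹ * ∑ x ∈ subT G o u, ∑ w ∈ pathE G o x, a w) hu
        exact mul_le_mul_of_nonneg_left hle (sq_nonneg _)
    _ = M * ∑ u ∈ E, g u ^ 2 := by rw [← Finset.sum_mul, mul_comm]
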